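/- (Generalized Goldie Theorem.) Let A be a dense additive subgroup of ℝ, and let g : ℝ → ℝ be continuous with g(0) = 1 and with {u ∈ A : g(u) = 1} = {0}. Suppose: (i) F* : ℝ → ℝ satisfies F*(x) > 0 for all x > 0, F*(u+v) ≤ F*(u) + F*(v) for all u, v > 0, and F*(x) → 0 as x → 0⁺; (ii) there is a function K, not identically zero on A, satisfying K(u+v) = g(v)·K(u) + K(v) for all u, v ∈ A, such that F*(u+v) = g(v)·K(u) + F*(v) for all u ∈ A and all v > 0; (iii) F*(x) = K(x) for all x ∈ A. Then there exist c > 0 and ρ ≥ 0 such that g(x) = e^{−ρx} for all x ∈ ℝ and F*(x) = c·H_ρ(x) for all x ∈ ℝ. -/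

import Mathlib

open Filter Set

/-- `H ρ t = (1 - e^{-ρ t})/ρ` for `ρ ≠ 0`, with `H 0 t = t`. -/
noncomputable def Hrho (ρ t : ℝ) : ℝ := if ρ = 0 then t else (1 - Real.exp (-ρ * t)) / ρ

theorem generalized_goldie_theorem
    (A : AddSubgroup ℝ) (hA : Dense (A : Set ℝ))
    (g : ℝ → ℝ) (hgcont : Continuous g) (hg0 : g 0 = 1)
    (hgA : {u : ℝ | u ∈ A ∧ g u = 1} = {0})
    (F K : ℝ → ℝ)
    (hFpos : ∀ x : ℝ, 0 < x → 0 < F x)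
    (hFsub : ∀ u v : ℝ, 0 < u → 0 < v → F (u + v) ≤ F u + F v)
    (hF0 : Filter.Tendsto F (nhdsWithin 0 (Set.Ioi 0)) (nhds 0))
    (hKne : ∃ u ∈ A, K u ≠ 0)
    (hKGoldie : ∀ u ∈ A, ∀ v ∈ A, K (u + v) = g v * K u + K v)
    (hFK : ∀ u ∈ A, ∀ v : ℝ, 0 < v → F (u + v) = g v * K u + F v)
    (hext : ∀ x ∈ A, F x = K x) :
    ∃ c : ℝ, 0 < c ∧ ∃ ρ : ℝ, 0 ≤ ρ ∧
      (∀ x : ℝ, g x = Real.exp (-ρ * x)) ∧ (∀ x : ℝ, F x = c * Hrho ρ x) := by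
  -- K 0 = 0
  have hK0 : K 0 = 0 := by
    have h := hKGoldie 0 A.zero_mem 0 A.zero_mem
    simp [hg0] at h
    linarith
  obtain ⟨u0, hu0A, hKu0⟩ := hKne
  have hgu0 : g u0 ≠ 1 := by
    intro h
    have hmem : u0 ∈ ({0} : Set ℝ) := by rw [← hgA]; exact ⟨hu0A, h⟩
    simp only [Set.mem_singleton_iff] at hmem
    exact hKu0 (hmem ▸ hK0)
  set κ := K u0 / (g u0 - 1) with hκdef
  have hgu0' : g u0 - 1 ≠ 0 := sub_ne_zero.mpr hgu0
  have hκne : κ ≠ 0 := div_ne_zero hKu0 hgu0'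
  have hKform : ∀ v ∈ A, K v = κ * (g v - 1) := by
    intro v hv
    have h1 := hKGoldie u0 hu0A v hv
    have h2 := hKGoldie v hv u0 hu0A
    rw [add_comm v u0] at h2
    have h3 : (g v - 1) * K u0 = (g u0 - 1) * K v := by
      have := h1.symm.trans h2; nlinarith [this]
    rw [hκdef, div_mul_eq_mul_div, eq_div_iff hgu0']
    linear_combination -h3
  have hgmulA : ∀ u ∈ A, ∀ v ∈ A, g (u + v) = g u * g v := by
    intro u hu v hv
    have h := hKGoldie u hu v hv
    rw [hKform _ (A.add_mem hu hv), hKform _ hu, hKform _ hv] at h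
    have h0 : κ * (g (u + v) - g u * g v) = 0 := by linear_combination h
    have := (mul_eq_zero.mp h0).resolve_left hκne
    linarith
  -- g multiplicative everywhere
  have hgmul : ∀ x y : ℝ, g (x + y) = g x * g y := by
    have hd : Dense ((A : Set ℝ) ×ˢ (A : Set ℝ)) := hA.prod hA
    have hcl : (fun p : ℝ × ℝ => g (p.1 + p.2)) = fun p : ℝ × ℝ => g p.1 * g p.2 :=
      Continuous.ext_on hd (hgcont.comp (continuous_fst.add continuous_snd))
        ((hgcont.comp continuous_fst).mul (hgcont.comp continuous_snd))
        (fun p hp => hgmulA p.1 hp.1 p.2 hp.2)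
    intro x y
    exact congrFun hcl (x, y)
  have hgne : ∀ x : ℝ, g x ≠ 0 := by
    intro x hx
    have h := hgmul x (-x)
    rw [add_neg_cancel, hg0, hx] at h
    simp at h
  have hgpos : ∀ x : ℝ, 0 < g x := by
    intro x
    have h := hgmul (x / 2) (x / 2)
    rw [add_halves] at h
    have hne := hgne (x / 2)
    rw [h]
    exact mul_self_pos.mpr hne
  -- log ∘ g is additive and continuous, hence linear
  set h : ℝ → ℝ := fun x => Real.log (g x) with hhdef
  have hhcont : Continuous h := by
    rw [continuous_iff_continuousAt]
    intro x
    exact (Real.continuousAt_log (hgpos x).ne').comp hgcont.continuousAt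
  have hhadd : ∀ x y : ℝ, h (x + y) = h x + h y := by
    intro x y
    simp only [hhdef, hgmul x y, Real.log_mul (hgpos x).ne' (hgpos y).ne']
  set hm : ℝ →+ ℝ := AddMonoidHom.mk' h hhadd with hmdef
  have hlin : ∀ x : ℝ, h x = h 1 * x := by
    intro x
    have := (hm.toRealLinearMap hhcont).map_smul x 1
    simp only [AddMonoidHom.coe_toRealLinearMap, smul_eq_mul, mul_one] at this
    exact this.trans (mul_comm x (hm 1))
  set a : ℝ := h 1 with hadef
  have hgexp : ∀ x : ℝ, g x = Real.exp (a * x) := by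
    intro x
    have : Real.log (g x) = a * x := by rw [← hlin x]
    rw [← this, Real.exp_log (hgpos x)]
  -- pick positive element of A
  obtain ⟨u1, hu1A, hu1I⟩ := hA.exists_between (by norm_num : (0:ℝ) < 1)
  have hu1pos : (0:ℝ) < u1 := hu1I.1
  have hgu1 : g u1 ≠ 1 := by
    intro hgeq
    have hmem : u1 ∈ ({0} : Set ℝ) := by rw [← hgA]; exact ⟨hu1A, hgeq⟩
    simp only [Set.mem_singleton_iff] at hmem
    exact absurd hmem (ne_of_gt hu1pos)
  set t := g u1 with htdef
  have htne : t - 1 ≠ 0 := sub_ne_zero.mpr hgu1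
  -- subadditivity forces κ < 0
  have hFu1 : F u1 = κ * (t - 1) := by rw [hext u1 hu1A, hKform u1 hu1A]
  have hF2u1 : F (u1 + u1) = κ * (t * t - 1) := by
    rw [hext _ (A.add_mem hu1A hu1A), hKform _ (A.add_mem hu1A hu1A), hgmulA u1 hu1A u1 hu1A]
  have hsub := hFsub u1 u1 hu1pos hu1pos
  rw [hF2u1, hFu1] at hsub
  have hκneg : κ < 0 := by
    rcases lt_or_gt_of_ne hκne with h | h
    · exact h
    · exfalso; nlinarith [sq_pos_of_ne_zero htne, sq_nonneg (t - 1)]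
  have hFu1pos := hFpos u1 hu1pos
  rw [hFu1] at hFu1pos
  have htlt : t < 1 := by nlinarith
  have haneg : a < 0 := by
    by_contra hc
    push_neg at hc
    have : (1:ℝ) ≤ Real.exp (a * u1) := Real.one_le_exp (by positivity)
    rw [← hgexp u1] at this
    linarith
  set ρ : ℝ := -a with hρdef
  have hρpos : 0 < ρ := by simp [hρdef]; linarith
  -- F x = κ * (g x - 1) for all x
  have key : ∀ x : ℝ, F x = κ * (g x - 1) := by
    intro x
    have hseq : ∀ n : ℕ, ∃ u, u ∈ (A : Set ℝ) ∧ u ∈ Set.Ioo (x - 1 / (n + 1)) x := by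
      intro n
      have hp : (0:ℝ) < 1 / (n + 1) := by positivity
      exact hA.exists_between (by linarith : x - 1 / (n + 1) < x)
    choose u huA huI using hseq
    have hvpos : ∀ n, 0 < x - u n := fun n => by linarith [(huI n).2]
    have hvlt : ∀ n, x - u n < 1 / (n + 1) := fun n => by linarith [(huI n).1]
    have hvlim : Tendsto (fun n : ℕ => x - u n) atTop (nhdsWithin 0 (Set.Ioi 0)) := by
      rw [tendsto_nhdsWithin_iff]
      constructor
      · have hup : Tendsto (fun n : ℕ => (1:ℝ) / (n + 1)) atTop (nhds 0) :=
          tendsto_one_div_add_atTop_nhds_zero_nat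
        exact squeeze_zero (fun n => (hvpos n).le) (fun n => (hvlt n).le) hup
      · exact Eventually.of_forall fun n => hvpos n
    have hulim : Tendsto u atTop (nhds x) := by
      have : Tendsto (fun n => x - (x - u n)) atTop (nhds (x - 0)) :=
        (tendsto_const_nhds).sub (hvlim.mono_right nhdsWithin_le_nhds)
      simpa using this
    have heq : ∀ n, F x = g (x - u n) * (κ * (g (u n) - 1)) + F (x - u n) := by
      intro n
      have h := hFK (u n) (huA n) (x - u n) (hvpos n)
      rw [show u n + (x - u n) = x by ring, hKform _ (huA n)] at h
      exact h
    have hlim : Tendsto (fun n => g (x - u n) * (κ * (g (u n) - 1)) + F (x - u n)) atTop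
        (nhds (1 * (κ * (g x - 1)) + 0)) := by
      apply Tendsto.add
      · apply Tendsto.mul
        · have := hgcont.continuousAt (x := (0:ℝ)).tendsto
          rw [hg0] at this
          exact this.comp (hvlim.mono_right nhdsWithin_le_nhds)
        · exact (tendsto_const_nhds.mul
            (((hgcont.continuousAt.tendsto).comp hulim).sub tendsto_const_nhds))
      · exact hF0.comp hvlim
    have hlim' : Tendsto (fun _ : ℕ => F x) atTop (nhds (1 * (κ * (g x - 1)) + 0)) :=
      hlim.congr fun n => (heq n).symm
    have := tendsto_nhds_unique tendsto_const_nhds hlim'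
    rw [this]; ring
  refine ⟨-κ * ρ, mul_pos (neg_pos.mpr hκneg) hρpos, ρ, hρpos.le, ?_, ?_⟩
  · intro x
    rw [hgexp x]; ring_nf
    congr 1; rw [hρdef]; ring
  · intro x
    rw [key x, hgexp x, Hrho, if_neg hρpos.ne']
    field_simp
    ring_nf
    congr 2; rw [hρdef]; ring
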